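/- Let F_{μν} be a real antisymmetric 4×4 matrix and β ≠ 0 a real number. Set F := F_{μν}F^{μν}, G := F*_{μν}F^{μν}, and U := 1 + F/(2β²) − G²/(16β⁴). Then: (a) det( δ^μ_ν + (1/β) F^μ{}_ν ) = U, and (b) det( δ^μ_ν − (1/β²) F^μ{}_α F^α{}_ν ) = U², where the determinants are of the 4×4 matrices with entries indexed by (μ, ν). -/
import Mathlib

open scoped BigOperators

noncomputable section

/-- The Minkowski metric η = diag(1,-1,-1,-1) (same components for η_{μν} and η^{μν}). -/
def η (μ ν : Fin 4) : ℝ := if μ = ν then (if μ = 0 then 1 else -1) else 0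

/-- The Levi-Civita symbol ε_{abcd} on four indices, with ε₀₁₂₃ = 1. -/
def lc (a b c d : Fin 4) : ℝ :=
  ∑ σ : Equiv.Perm (Fin 4),
    if σ 0 = a ∧ σ 1 = b ∧ σ 2 = c ∧ σ 3 = d then ((Equiv.Perm.sign σ : ℤ) : ℝ) else 0

def eZ (a b c d : Fin 4) : ℤ :=
  ∑ σ : Equiv.Perm (Fin 4),
    if σ 0 = a ∧ σ 1 = b ∧ σ 2 = c ∧ σ 3 = d then ((Equiv.Perm.sign σ : ℤ)) else 0

lemma lc_eq (a b c d : Fin 4) : lc a b c d = ((eZ a b c d : ℤ) : ℝ) := by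
  unfold lc eZ
  rw [Int.cast_sum]
  refine Finset.sum_congr rfl fun σ _ => ?_
  split <;> simp

@[simp] lemma eZ_0000 : eZ 0 0 0 0 = 0 := by decide
@[simp] lemma eZ_0001 : eZ 0 0 0 1 = 0 := by decide
@[simp] lemma eZ_0002 : eZ 0 0 0 2 = 0 := by decide
@[simp] lemma eZ_0003 : eZ 0 0 0 3 = 0 := by decide
@[simp] lemma eZ_0010 : eZ 0 0 1 0 = 0 := by decide
@[simp] lemma eZ_0011 : eZ 0 0 1 1 = 0 := by decide
@[simp] lemma eZ_0012 : eZ 0 0 1 2 = 0 := by decide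
@[simp] lemma eZ_0013 : eZ 0 0 1 3 = 0 := by decide
@[simp] lemma eZ_0020 : eZ 0 0 2 0 = 0 := by decide
@[simp] lemma eZ_0021 : eZ 0 0 2 1 = 0 := by decide
@[simp] lemma eZ_0022 : eZ 0 0 2 2 = 0 := by decide
@[simp] lemma eZ_0023 : eZ 0 0 2 3 = 0 := by decide
@[simp] lemma eZ_0030 : eZ 0 0 3 0 = 0 := by decide
@[simp] lemma eZ_0031 : eZ 0 0 3 1 = 0 := by decide
@[simp] lemma eZ_0032 : eZ 0 0 3 2 = 0 := by decide
@[simp] lemma eZ_0033 : eZ 0 0 3 3 = 0 := by decide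
@[simp] lemma eZ_0100 : eZ 0 1 0 0 = 0 := by decide
@[simp] lemma eZ_0101 : eZ 0 1 0 1 = 0 := by decide
@[simp] lemma eZ_0102 : eZ 0 1 0 2 = 0 := by decide
@[simp] lemma eZ_0103 : eZ 0 1 0 3 = 0 := by decide
@[simp] lemma eZ_0110 : eZ 0 1 1 0 = 0 := by decide
@[simp] lemma eZ_0111 : eZ 0 1 1 1 = 0 := by decide
@[simp] lemma eZ_0112 : eZ 0 1 1 2 = 0 := by decide
@[simp] lemma eZ_0113 : eZ 0 1 1 3 = 0 := by decide
@[simp] lemma eZ_0120 : eZ 0 1 2 0 = 0 := by decide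
@[simp] lemma eZ_0121 : eZ 0 1 2 1 = 0 := by decide
@[simp] lemma eZ_0122 : eZ 0 1 2 2 = 0 := by decide
@[simp] lemma eZ_0123 : eZ 0 1 2 3 = 1 := by decide
@[simp] lemma eZ_0130 : eZ 0 1 3 0 = 0 := by decide
@[simp] lemma eZ_0131 : eZ 0 1 3 1 = 0 := by decide
@[simp] lemma eZ_0132 : eZ 0 1 3 2 = -1 := by decide
@[simp] lemma eZ_0133 : eZ 0 1 3 3 = 0 := by decide
@[simp] lemma eZ_0200 : eZ 0 2 0 0 = 0 := by decide
@[simp] lemma eZ_0201 : eZ 0 2 0 1 = 0 := by decide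
@[simp] lemma eZ_0202 : eZ 0 2 0 2 = 0 := by decide
@[simp] lemma eZ_0203 : eZ 0 2 0 3 = 0 := by decide
@[simp] lemma eZ_0210 : eZ 0 2 1 0 = 0 := by decide
@[simp] lemma eZ_0211 : eZ 0 2 1 1 = 0 := by decide
@[simp] lemma eZ_0212 : eZ 0 2 1 2 = 0 := by decide
@[simp] lemma eZ_0213 : eZ 0 2 1 3 = -1 := by decide
@[simp] lemma eZ_0220 : eZ 0 2 2 0 = 0 := by decide
@[simp] lemma eZ_0221 : eZ 0 2 2 1 = 0 := by decide
@[simp] lemma eZ_0222 : eZ 0 2 2 2 = 0 := by decide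
@[simp] lemma eZ_0223 : eZ 0 2 2 3 = 0 := by decide
@[simp] lemma eZ_0230 : eZ 0 2 3 0 = 0 := by decide
@[simp] lemma eZ_0231 : eZ 0 2 3 1 = 1 := by decide
@[simp] lemma eZ_0232 : eZ 0 2 3 2 = 0 := by decide
@[simp] lemma eZ_0233 : eZ 0 2 3 3 = 0 := by decide
@[simp] lemma eZ_0300 : eZ 0 3 0 0 = 0 := by decide
@[simp] lemma eZ_0301 : eZ 0 3 0 1 = 0 := by decide
@[simp] lemma eZ_0302 : eZ 0 3 0 2 = 0 := by decide
@[simp] lemma eZ_0303 : eZ 0 3 0 3 = 0 := by decide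
@[simp] lemma eZ_0310 : eZ 0 3 1 0 = 0 := by decide
@[simp] lemma eZ_0311 : eZ 0 3 1 1 = 0 := by decide
@[simp] lemma eZ_0312 : eZ 0 3 1 2 = 1 := by decide
@[simp] lemma eZ_0313 : eZ 0 3 1 3 = 0 := by decide
@[simp] lemma eZ_0320 : eZ 0 3 2 0 = 0 := by decide
@[simp] lemma eZ_0321 : eZ 0 3 2 1 = -1 := by decide
@[simp] lemma eZ_0322 : eZ 0 3 2 2 = 0 := by decide
@[simp] lemma eZ_0323 : eZ 0 3 2 3 = 0 := by decide
@[simp] lemma eZ_0330 : eZ 0 3 3 0 = 0 := by decide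
@[simp] lemma eZ_0331 : eZ 0 3 3 1 = 0 := by decide
@[simp] lemma eZ_0332 : eZ 0 3 3 2 = 0 := by decide
@[simp] lemma eZ_0333 : eZ 0 3 3 3 = 0 := by decide
@[simp] lemma eZ_1000 : eZ 1 0 0 0 = 0 := by decide
@[simp] lemma eZ_1001 : eZ 1 0 0 1 = 0 := by decide
@[simp] lemma eZ_1002 : eZ 1 0 0 2 = 0 := by decide
@[simp] lemma eZ_1003 : eZ 1 0 0 3 = 0 := by decide
@[simp] lemma eZ_1010 : eZ 1 0 1 0 = 0 := by decide
@[simp] lemma eZ_1011 : eZ 1 0 1 1 = 0 := by decide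
@[simp] lemma eZ_1012 : eZ 1 0 1 2 = 0 := by decide
@[simp] lemma eZ_1013 : eZ 1 0 1 3 = 0 := by decide
@[simp] lemma eZ_1020 : eZ 1 0 2 0 = 0 := by decide
@[simp] lemma eZ_1021 : eZ 1 0 2 1 = 0 := by decide
@[simp] lemma eZ_1022 : eZ 1 0 2 2 = 0 := by decide
@[simp] lemma eZ_1023 : eZ 1 0 2 3 = -1 := by decide
@[simp] lemma eZ_1030 : eZ 1 0 3 0 = 0 := by decide
@[simp] lemma eZ_1031 : eZ 1 0 3 1 = 0 := by decide
@[simp] lemma eZ_1032 : eZ 1 0 3 2 = 1 := by decide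
@[simp] lemma eZ_1033 : eZ 1 0 3 3 = 0 := by decide
@[simp] lemma eZ_1100 : eZ 1 1 0 0 = 0 := by decide
@[simp] lemma eZ_1101 : eZ 1 1 0 1 = 0 := by decide
@[simp] lemma eZ_1102 : eZ 1 1 0 2 = 0 := by decide
@[simp] lemma eZ_1103 : eZ 1 1 0 3 = 0 := by decide
@[simp] lemma eZ_1110 : eZ 1 1 1 0 = 0 := by decide
@[simp] lemma eZ_1111 : eZ 1 1 1 1 = 0 := by decide
@[simp] lemma eZ_1112 : eZ 1 1 1 2 = 0 := by decide
@[simp] lemma eZ_1113 : eZ 1 1 1 3 = 0 := by decide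
@[simp] lemma eZ_1120 : eZ 1 1 2 0 = 0 := by decide
@[simp] lemma eZ_1121 : eZ 1 1 2 1 = 0 := by decide
@[simp] lemma eZ_1122 : eZ 1 1 2 2 = 0 := by decide
@[simp] lemma eZ_1123 : eZ 1 1 2 3 = 0 := by decide
@[simp] lemma eZ_1130 : eZ 1 1 3 0 = 0 := by decide
@[simp] lemma eZ_1131 : eZ 1 1 3 1 = 0 := by decide
@[simp] lemma eZ_1132 : eZ 1 1 3 2 = 0 := by decide
@[simp] lemma eZ_1133 : eZ 1 1 3 3 = 0 := by decide
@[simp] lemma eZ_1200 : eZ 1 2 0 0 = 0 := by decide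
@[simp] lemma eZ_1201 : eZ 1 2 0 1 = 0 := by decide
@[simp] lemma eZ_1202 : eZ 1 2 0 2 = 0 := by decide
@[simp] lemma eZ_1203 : eZ 1 2 0 3 = 1 := by decide
@[simp] lemma eZ_1210 : eZ 1 2 1 0 = 0 := by decide
@[simp] lemma eZ_1211 : eZ 1 2 1 1 = 0 := by decide
@[simp] lemma eZ_1212 : eZ 1 2 1 2 = 0 := by decide
@[simp] lemma eZ_1213 : eZ 1 2 1 3 = 0 := by decide
@[simp] lemma eZ_1220 : eZ 1 2 2 0 = 0 := by decide
@[simp] lemma eZ_1221 : eZ 1 2 2 1 = 0 := by decide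
@[simp] lemma eZ_1222 : eZ 1 2 2 2 = 0 := by decide
@[simp] lemma eZ_1223 : eZ 1 2 2 3 = 0 := by decide
@[simp] lemma eZ_1230 : eZ 1 2 3 0 = -1 := by decide
@[simp] lemma eZ_1231 : eZ 1 2 3 1 = 0 := by decide
@[simp] lemma eZ_1232 : eZ 1 2 3 2 = 0 := by decide
@[simp] lemma eZ_1233 : eZ 1 2 3 3 = 0 := by decide
@[simp] lemma eZ_1300 : eZ 1 3 0 0 = 0 := by decide
@[simp] lemma eZ_1301 : eZ 1 3 0 1 = 0 := by decide
@[simp] lemma eZ_1302 : eZ 1 3 0 2 = -1 := by decide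
@[simp] lemma eZ_1303 : eZ 1 3 0 3 = 0 := by decide
@[simp] lemma eZ_1310 : eZ 1 3 1 0 = 0 := by decide
@[simp] lemma eZ_1311 : eZ 1 3 1 1 = 0 := by decide
@[simp] lemma eZ_1312 : eZ 1 3 1 2 = 0 := by decide
@[simp] lemma eZ_1313 : eZ 1 3 1 3 = 0 := by decide
@[simp] lemma eZ_1320 : eZ 1 3 2 0 = 1 := by decide
@[simp] lemma eZ_1321 : eZ 1 3 2 1 = 0 := by decide
@[simp] lemma eZ_1322 : eZ 1 3 2 2 = 0 := by decide
@[simp] lemma eZ_1323 : eZ 1 3 2 3 = 0 := by decide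
@[simp] lemma eZ_1330 : eZ 1 3 3 0 = 0 := by decide
@[simp] lemma eZ_1331 : eZ 1 3 3 1 = 0 := by decide
@[simp] lemma eZ_1332 : eZ 1 3 3 2 = 0 := by decide
@[simp] lemma eZ_1333 : eZ 1 3 3 3 = 0 := by decide
@[simp] lemma eZ_2000 : eZ 2 0 0 0 = 0 := by decide
@[simp] lemma eZ_2001 : eZ 2 0 0 1 = 0 := by decide
@[simp] lemma eZ_2002 : eZ 2 0 0 2 = 0 := by decide
@[simp] lemma eZ_2003 : eZ 2 0 0 3 = 0 := by decide
@[simp] lemma eZ_2010 : eZ 2 0 1 0 = 0 := by decide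
@[simp] lemma eZ_2011 : eZ 2 0 1 1 = 0 := by decide
@[simp] lemma eZ_2012 : eZ 2 0 1 2 = 0 := by decide
@[simp] lemma eZ_2013 : eZ 2 0 1 3 = 1 := by decide
@[simp] lemma eZ_2020 : eZ 2 0 2 0 = 0 := by decide
@[simp] lemma eZ_2021 : eZ 2 0 2 1 = 0 := by decide
@[simp] lemma eZ_2022 : eZ 2 0 2 2 = 0 := by decide
@[simp] lemma eZ_2023 : eZ 2 0 2 3 = 0 := by decide
@[simp] lemma eZ_2030 : eZ 2 0 3 0 = 0 := by decide
@[simp] lemma eZ_2031 : eZ 2 0 3 1 = -1 := by decide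
@[simp] lemma eZ_2032 : eZ 2 0 3 2 = 0 := by decide
@[simp] lemma eZ_2033 : eZ 2 0 3 3 = 0 := by decide
@[simp] lemma eZ_2100 : eZ 2 1 0 0 = 0 := by decide
@[simp] lemma eZ_2101 : eZ 2 1 0 1 = 0 := by decide
@[simp] lemma eZ_2102 : eZ 2 1 0 2 = 0 := by decide
@[simp] lemma eZ_2103 : eZ 2 1 0 3 = -1 := by decide
@[simp] lemma eZ_2110 : eZ 2 1 1 0 = 0 := by decide
@[simp] lemma eZ_2111 : eZ 2 1 1 1 = 0 := by decide
@[simp] lemma eZ_2112 : eZ 2 1 1 2 = 0 := by decide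
@[simp] lemma eZ_2113 : eZ 2 1 1 3 = 0 := by decide
@[simp] lemma eZ_2120 : eZ 2 1 2 0 = 0 := by decide
@[simp] lemma eZ_2121 : eZ 2 1 2 1 = 0 := by decide
@[simp] lemma eZ_2122 : eZ 2 1 2 2 = 0 := by decide
@[simp] lemma eZ_2123 : eZ 2 1 2 3 = 0 := by decide
@[simp] lemma eZ_2130 : eZ 2 1 3 0 = 1 := by decide
@[simp] lemma eZ_2131 : eZ 2 1 3 1 = 0 := by decide
@[simp] lemma eZ_2132 : eZ 2 1 3 2 = 0 := by decide
@[simp] lemma eZ_2133 : eZ 2 1 3 3 = 0 := by decide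
@[simp] lemma eZ_2200 : eZ 2 2 0 0 = 0 := by decide
@[simp] lemma eZ_2201 : eZ 2 2 0 1 = 0 := by decide
@[simp] lemma eZ_2202 : eZ 2 2 0 2 = 0 := by decide
@[simp] lemma eZ_2203 : eZ 2 2 0 3 = 0 := by decide
@[simp] lemma eZ_2210 : eZ 2 2 1 0 = 0 := by decide
@[simp] lemma eZ_2211 : eZ 2 2 1 1 = 0 := by decide
@[simp] lemma eZ_2212 : eZ 2 2 1 2 = 0 := by decide
@[simp] lemma eZ_2213 : eZ 2 2 1 3 = 0 := by decide
@[simp] lemma eZ_2220 : eZ 2 2 2 0 = 0 := by decide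
@[simp] lemma eZ_2221 : eZ 2 2 2 1 = 0 := by decide
@[simp] lemma eZ_2222 : eZ 2 2 2 2 = 0 := by decide
@[simp] lemma eZ_2223 : eZ 2 2 2 3 = 0 := by decide
@[simp] lemma eZ_2230 : eZ 2 2 3 0 = 0 := by decide
@[simp] lemma eZ_2231 : eZ 2 2 3 1 = 0 := by decide
@[simp] lemma eZ_2232 : eZ 2 2 3 2 = 0 := by decide
@[simp] lemma eZ_2233 : eZ 2 2 3 3 = 0 := by decide
@[simp] lemma eZ_2300 : eZ 2 3 0 0 = 0 := by decide
@[simp] lemma eZ_2301 : eZ 2 3 0 1 = 1 := by decide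
@[simp] lemma eZ_2302 : eZ 2 3 0 2 = 0 := by decide
@[simp] lemma eZ_2303 : eZ 2 3 0 3 = 0 := by decide
@[simp] lemma eZ_2310 : eZ 2 3 1 0 = -1 := by decide
@[simp] lemma eZ_2311 : eZ 2 3 1 1 = 0 := by decide
@[simp] lemma eZ_2312 : eZ 2 3 1 2 = 0 := by decide
@[simp] lemma eZ_2313 : eZ 2 3 1 3 = 0 := by decide
@[simp] lemma eZ_2320 : eZ 2 3 2 0 = 0 := by decide
@[simp] lemma eZ_2321 : eZ 2 3 2 1 = 0 := by decide
@[simp] lemma eZ_2322 : eZ 2 3 2 2 = 0 := by decide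
@[simp] lemma eZ_2323 : eZ 2 3 2 3 = 0 := by decide
@[simp] lemma eZ_2330 : eZ 2 3 3 0 = 0 := by decide
@[simp] lemma eZ_2331 : eZ 2 3 3 1 = 0 := by decide
@[simp] lemma eZ_2332 : eZ 2 3 3 2 = 0 := by decide
@[simp] lemma eZ_2333 : eZ 2 3 3 3 = 0 := by decide
@[simp] lemma eZ_3000 : eZ 3 0 0 0 = 0 := by decide
@[simp] lemma eZ_3001 : eZ 3 0 0 1 = 0 := by decide
@[simp] lemma eZ_3002 : eZ 3 0 0 2 = 0 := by decide
@[simp] lemma eZ_3003 : eZ 3 0 0 3 = 0 := by decide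
@[simp] lemma eZ_3010 : eZ 3 0 1 0 = 0 := by decide
@[simp] lemma eZ_3011 : eZ 3 0 1 1 = 0 := by decide
@[simp] lemma eZ_3012 : eZ 3 0 1 2 = -1 := by decide
@[simp] lemma eZ_3013 : eZ 3 0 1 3 = 0 := by decide
@[simp] lemma eZ_3020 : eZ 3 0 2 0 = 0 := by decide
@[simp] lemma eZ_3021 : eZ 3 0 2 1 = 1 := by decide
@[simp] lemma eZ_3022 : eZ 3 0 2 2 = 0 := by decide
@[simp] lemma eZ_3023 : eZ 3 0 2 3 = 0 := by decide
@[simp] lemma eZ_3030 : eZ 3 0 3 0 = 0 := by decide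
@[simp] lemma eZ_3031 : eZ 3 0 3 1 = 0 := by decide
@[simp] lemma eZ_3032 : eZ 3 0 3 2 = 0 := by decide
@[simp] lemma eZ_3033 : eZ 3 0 3 3 = 0 := by decide
@[simp] lemma eZ_3100 : eZ 3 1 0 0 = 0 := by decide
@[simp] lemma eZ_3101 : eZ 3 1 0 1 = 0 := by decide
@[simp] lemma eZ_3102 : eZ 3 1 0 2 = 1 := by decide
@[simp] lemma eZ_3103 : eZ 3 1 0 3 = 0 := by decide
@[simp] lemma eZ_3110 : eZ 3 1 1 0 = 0 := by decide
@[simp] lemma eZ_3111 : eZ 3 1 1 1 = 0 := by decide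
@[simp] lemma eZ_3112 : eZ 3 1 1 2 = 0 := by decide
@[simp] lemma eZ_3113 : eZ 3 1 1 3 = 0 := by decide
@[simp] lemma eZ_3120 : eZ 3 1 2 0 = -1 := by decide
@[simp] lemma eZ_3121 : eZ 3 1 2 1 = 0 := by decide
@[simp] lemma eZ_3122 : eZ 3 1 2 2 = 0 := by decide
@[simp] lemma eZ_3123 : eZ 3 1 2 3 = 0 := by decide
@[simp] lemma eZ_3130 : eZ 3 1 3 0 = 0 := by decide
@[simp] lemma eZ_3131 : eZ 3 1 3 1 = 0 := by decide
@[simp] lemma eZ_3132 : eZ 3 1 3 2 = 0 := by decide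
@[simp] lemma eZ_3133 : eZ 3 1 3 3 = 0 := by decide
@[simp] lemma eZ_3200 : eZ 3 2 0 0 = 0 := by decide
@[simp] lemma eZ_3201 : eZ 3 2 0 1 = -1 := by decide
@[simp] lemma eZ_3202 : eZ 3 2 0 2 = 0 := by decide
@[simp] lemma eZ_3203 : eZ 3 2 0 3 = 0 := by decide
@[simp] lemma eZ_3210 : eZ 3 2 1 0 = 1 := by decide
@[simp] lemma eZ_3211 : eZ 3 2 1 1 = 0 := by decide
@[simp] lemma eZ_3212 : eZ 3 2 1 2 = 0 := by decide
@[simp] lemma eZ_3213 : eZ 3 2 1 3 = 0 := by decide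
@[simp] lemma eZ_3220 : eZ 3 2 2 0 = 0 := by decide
@[simp] lemma eZ_3221 : eZ 3 2 2 1 = 0 := by decide
@[simp] lemma eZ_3222 : eZ 3 2 2 2 = 0 := by decide
@[simp] lemma eZ_3223 : eZ 3 2 2 3 = 0 := by decide
@[simp] lemma eZ_3230 : eZ 3 2 3 0 = 0 := by decide
@[simp] lemma eZ_3231 : eZ 3 2 3 1 = 0 := by decide
@[simp] lemma eZ_3232 : eZ 3 2 3 2 = 0 := by decide
@[simp] lemma eZ_3233 : eZ 3 2 3 3 = 0 := by decide
@[simp] lemma eZ_3300 : eZ 3 3 0 0 = 0 := by decide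
@[simp] lemma eZ_3301 : eZ 3 3 0 1 = 0 := by decide
@[simp] lemma eZ_3302 : eZ 3 3 0 2 = 0 := by decide
@[simp] lemma eZ_3303 : eZ 3 3 0 3 = 0 := by decide
@[simp] lemma eZ_3310 : eZ 3 3 1 0 = 0 := by decide
@[simp] lemma eZ_3311 : eZ 3 3 1 1 = 0 := by decide
@[simp] lemma eZ_3312 : eZ 3 3 1 2 = 0 := by decide
@[simp] lemma eZ_3313 : eZ 3 3 1 3 = 0 := by decide
@[simp] lemma eZ_3320 : eZ 3 3 2 0 = 0 := by decide
@[simp] lemma eZ_3321 : eZ 3 3 2 1 = 0 := by decide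
@[simp] lemma eZ_3322 : eZ 3 3 2 2 = 0 := by decide
@[simp] lemma eZ_3323 : eZ 3 3 2 3 = 0 := by decide
@[simp] lemma eZ_3330 : eZ 3 3 3 0 = 0 := by decide
@[simp] lemma eZ_3331 : eZ 3 3 3 1 = 0 := by decide
@[simp] lemma eZ_3332 : eZ 3 3 3 2 = 0 := by decide
@[simp] lemma eZ_3333 : eZ 3 3 3 3 = 0 := by decide
lemma finNE_0_1 : ((0:Fin 4) = 1) = False := eq_false (by decide)
lemma finNE_0_2 : ((0:Fin 4) = 2) = False := eq_false (by decide)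
lemma finNE_0_3 : ((0:Fin 4) = 3) = False := eq_false (by decide)
lemma finNE_1_0 : ((1:Fin 4) = 0) = False := eq_false (by decide)
lemma finNE_1_2 : ((1:Fin 4) = 2) = False := eq_false (by decide)
lemma finNE_1_3 : ((1:Fin 4) = 3) = False := eq_false (by decide)
lemma finNE_2_0 : ((2:Fin 4) = 0) = False := eq_false (by decide)
lemma finNE_2_1 : ((2:Fin 4) = 1) = False := eq_false (by decide)
lemma finNE_2_3 : ((2:Fin 4) = 3) = False := eq_false (by decide)
lemma finNE_3_0 : ((3:Fin 4) = 0) = False := eq_false (by decide)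
lemma finNE_3_1 : ((3:Fin 4) = 1) = False := eq_false (by decide)
lemma finNE_3_2 : ((3:Fin 4) = 2) = False := eq_false (by decide)

lemma det_fin_four' (A : Matrix (Fin 4) (Fin 4) ℝ) :
    A.det =
      A 0 0 * A 1 1 * A 2 2 * A 3 3 - A 0 0 * A 1 1 * A 2 3 * A 3 2 -
        A 0 0 * A 1 2 * A 2 1 * A 3 3 + A 0 0 * A 1 2 * A 2 3 * A 3 1 +
        A 0 0 * A 1 3 * A 2 1 * A 3 2 - A 0 0 * A 1 3 * A 2 2 * A 3 1 -
        A 0 1 * A 1 0 * A 2 2 * A 3 3 + A 0 1 * A 1 0 * A 2 3 * A 3 2 +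
        A 0 1 * A 1 2 * A 2 0 * A 3 3 - A 0 1 * A 1 2 * A 2 3 * A 3 0 -
        A 0 1 * A 1 3 * A 2 0 * A 3 2 + A 0 1 * A 1 3 * A 2 2 * A 3 0 +
        A 0 2 * A 1 0 * A 2 1 * A 3 3 - A 0 2 * A 1 0 * A 2 3 * A 3 1 -
        A 0 2 * A 1 1 * A 2 0 * A 3 3 + A 0 2 * A 1 1 * A 2 3 * A 3 0 +
        A 0 2 * A 1 3 * A 2 0 * A 3 1 - A 0 2 * A 1 3 * A 2 1 * A 3 0 -
        A 0 3 * A 1 0 * A 2 1 * A 3 2 + A 0 3 * A 1 0 * A 2 2 * A 3 1 +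
        A 0 3 * A 1 1 * A 2 0 * A 3 2 - A 0 3 * A 1 1 * A 2 2 * A 3 0 -
        A 0 3 * A 1 2 * A 2 0 * A 3 1 + A 0 3 * A 1 2 * A 2 1 * A 3 0 := by
  rw [Matrix.det_succ_row_zero]
  simp [Fin.sum_univ_succ, Matrix.det_fin_three, Fin.succ_zero_eq_one,
    (show ((2:Fin 3).succ) = (3:Fin 4) from rfl),
    (show (2:Fin 4).succAbove 2 = 3 from rfl),
    (show (1:Fin 4).succAbove 2 = 3 from rfl),
    (show (Fin.castSucc (2:Fin 3)) = (2:Fin 4) from rfl),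
    (show (3:Fin 4).succAbove 2 = 2 from rfl), (show (0:Fin 4).succAbove 2 = 3 from rfl),
    (show (3:Fin 4).succAbove 0 = 0 from rfl), (show (3:Fin 4).succAbove 1 = 1 from rfl)]
  ring

set_option maxHeartbeats 1000000 in
/-- Born–Infeld determinant formulas:
det(δ + F/β) = U and det(δ − F²/β²) = U². -/
theorem born_infeld_determinants
    (F : Fin 4 → Fin 4 → ℝ) (hFa : ∀ μ ν, F μ ν = - F ν μ)
    (β : ℝ) (hβ : β ≠ 0)
    -- raised components F^{μν}
    (Fup : Fin 4 → Fin 4 → ℝ)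
    (hFup : ∀ μ ν, Fup μ ν = ∑ α, ∑ b, η μ α * η ν b * F α b)
    -- dual F*_{μν} = ½ ε_{μναβ} F^{αβ}
    (Fd : Fin 4 → Fin 4 → ℝ)
    (hFd : ∀ μ ν, Fd μ ν = (1 / 2) * ∑ α, ∑ b, lc μ ν α b * Fup α b)
    -- invariants F, G, U
    (Fi G U : ℝ)
    (hFi : Fi = ∑ μ, ∑ ν, F μ ν * Fup μ ν)
    (hG : G = ∑ μ, ∑ ν, Fd μ ν * Fup μ ν)
    (hU : U = 1 + Fi / (2 * β ^ 2) - G ^ 2 / (16 * β ^ 4))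
    -- mixed matrix F^μ{}_ν = η^{μα}F_{αν}
    (M : Matrix (Fin 4) (Fin 4) ℝ)
    (hM : ∀ μ ν, M μ ν = ∑ α, η μ α * F α ν) :
    ((1 : Matrix (Fin 4) (Fin 4) ℝ) + β⁻¹ • M).det = U ∧
    ((1 : Matrix (Fin 4) (Fin 4) ℝ) - (β ^ 2)⁻¹ • (M * M)).det = U ^ 2 := by
  subst hU hFi hG
  have h00 : F 0 0 = 0 := by linarith [hFa 0 0]
  have h11 : F 1 1 = 0 := by linarith [hFa 1 1]
  have h22 : F 2 2 = 0 := by linarith [hFa 2 2]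
  have h33 : F 3 3 = 0 := by linarith [hFa 3 3]
  have h10 := hFa 1 0
  have h20 := hFa 2 0
  have h30 := hFa 3 0
  have h21 := hFa 2 1
  have h31 := hFa 3 1
  have h32 := hFa 3 2
  have Fupval : ∀ μ ν, Fup μ ν =
      (if μ = 0 then (1:ℝ) else -1) * (if ν = 0 then (1:ℝ) else -1) * F μ ν := by
    intro μ ν
    rw [hFup]
    fin_cases μ <;> fin_cases ν <;> norm_num [η, Fin.sum_univ_four]
  have Mval : ∀ μ ν, M μ ν = (if μ = 0 then (1:ℝ) else -1) * F μ ν := by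
    intro μ ν
    rw [hM]
    fin_cases μ <;> norm_num [η, Fin.sum_univ_four]
  have hFiv : (∑ μ, ∑ ν, F μ ν * Fup μ ν) =
      2*(F 1 2^2 + F 1 3^2 + F 2 3^2) - 2*(F 0 1^2 + F 0 2^2 + F 0 3^2) := by
    simp only [Fin.sum_univ_four, Fupval]
    norm_num [h00, h11, h22, h33, h10, h20, h30, h21, h31, h32, finNE_0_1, finNE_0_2, finNE_0_3, finNE_1_0, finNE_1_2, finNE_1_3, finNE_2_0, finNE_2_1, finNE_2_3, finNE_3_0, finNE_3_1, finNE_3_2]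
    ring
  have hGv : (∑ μ, ∑ ν, Fd μ ν * Fup μ ν) =
      -4*(F 0 1 * F 2 3 - F 0 2 * F 1 3 + F 0 3 * F 1 2) := by
    simp only [Fin.sum_univ_four, hFd, lc_eq, Fupval, finNE_0_1, finNE_0_2, finNE_0_3, finNE_1_0, finNE_1_2, finNE_1_3, finNE_2_0, finNE_2_1, finNE_2_3, finNE_3_0, finNE_3_1, finNE_3_2, if_true, if_false]
    norm_num [h00, h11, h22, h33, h10, h20, h30, h21, h31, h32, finNE_0_1, finNE_0_2, finNE_0_3, finNE_1_0, finNE_1_2, finNE_1_3, finNE_2_0, finNE_2_1, finNE_2_3, finNE_3_0, finNE_3_1, finNE_3_2]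
    ring
  rw [hFiv, hGv]
  constructor
  · rw [det_fin_four']
    simp only [Matrix.add_apply, Matrix.smul_apply, Matrix.one_apply, Mval, smul_eq_mul, finNE_0_1, finNE_0_2, finNE_0_3, finNE_1_0, finNE_1_2, finNE_1_3, finNE_2_0, finNE_2_1, finNE_2_3, finNE_3_0, finNE_3_1, finNE_3_2, if_true, if_false, eq_self_iff_true]
    norm_num [h00, h11, h22, h33, h10, h20, h30, h21, h31, h32, finNE_0_1, finNE_0_2, finNE_0_3, finNE_1_0, finNE_1_2, finNE_1_3, finNE_2_0, finNE_2_1, finNE_2_3, finNE_3_0, finNE_3_1, finNE_3_2]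
    ring
  · have MMval : ∀ i j, (M * M) i j =
        (if i = 0 then (1:ℝ) else -1) *
          (F i 0 * F 0 j - F i 1 * F 1 j - F i 2 * F 2 j - F i 3 * F 3 j) := by
      intro i j
      rw [Matrix.mul_apply, Fin.sum_univ_four]
      simp only [Mval, finNE_0_1, finNE_0_2, finNE_0_3, finNE_1_0, finNE_1_2, finNE_1_3, finNE_2_0, finNE_2_1, finNE_2_3, finNE_3_0, finNE_3_1, finNE_3_2, if_true, if_false, eq_self_iff_true]
      ring
    rw [det_fin_four']
    simp only [Matrix.sub_apply, Matrix.smul_apply, Matrix.one_apply, MMval,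
      smul_eq_mul, finNE_0_1, finNE_0_2, finNE_0_3, finNE_1_0, finNE_1_2, finNE_1_3, finNE_2_0, finNE_2_1, finNE_2_3, finNE_3_0, finNE_3_1, finNE_3_2, if_true, if_false, eq_self_iff_true]
    norm_num [h00, h11, h22, h33, h10, h20, h30, h21, h31, h32, finNE_0_1, finNE_0_2, finNE_0_3, finNE_1_0, finNE_1_2, finNE_1_3, finNE_2_0, finNE_2_1, finNE_2_3, finNE_3_0, finNE_3_1, finNE_3_2]
    ring
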